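/- Let Ω be a compact continuous signature and 𝐀 an affinely bounded compact Hausdorff topological Ω-algebra. If 𝐀 is simple (every non-constant continuous homomorphism of 𝐀 into a Hausdorff topological Ω-algebra is injective), then the carrier A is connected or finite. -/

import Mathlib

def TermSp (Ω : ℕ → Type) (A : Type) (m : ℕ) : ℕ → Type
  | 0 => Unit ⊕ A
  | h+1 => TermSp Ω A m h ⊕ (Σ n : Fin (m+1), Ω n × (Fin n → TermSp Ω A m h))

instance TermSp.topologicalSpace (Ω : ℕ → Type) [∀ n, TopologicalSpace (Ω n)]
    (A : Type) [TopologicalSpace A] (m : ℕ) :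
    ∀ h, TopologicalSpace (TermSp Ω A m h)
  | 0 => inferInstanceAs (TopologicalSpace (Unit ⊕ A))
  | h+1 =>
      letI := TermSp.topologicalSpace Ω A m h
      inferInstanceAs (TopologicalSpace (TermSp Ω A m h ⊕ (Σ n : Fin (m+1), Ω n × (Fin n → TermSp Ω A m h))))

instance TermSp.compactSpace (Ω : ℕ → Type) [∀ n, TopologicalSpace (Ω n)]
    [∀ n, CompactSpace (Ω n)]
    (A : Type) [TopologicalSpace A] [CompactSpace A] (m : ℕ) :
    ∀ h, CompactSpace (TermSp Ω A m h)
  | 0 => inferInstanceAs (CompactSpace (Unit ⊕ A))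
  | h+1 =>
      letI := TermSp.compactSpace Ω A m h
      inferInstanceAs (CompactSpace (TermSp Ω A m h ⊕ (Σ n : Fin (m+1), Ω n × (Fin n → TermSp Ω A m h))))

def TermSp.eval {Ω : ℕ → Type} {A : Type} {m : ℕ} (E : ∀ n, Ω n → (Fin n → A) → A) :
    ∀ {h}, TermSp Ω A m h → A → A
  | 0, Sum.inl _, x => x
  | 0, Sum.inr a, _ => a
  | h+1, Sum.inl c, x => TermSp.eval E (h := h) c x
  | _+1, Sum.inr ⟨n, ω, ts⟩, x => E n ω fun i => TermSp.eval E (ts i) x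


lemma continuous_sumProd {X Y Z W : Type*} [TopologicalSpace X] [TopologicalSpace Y]
    [TopologicalSpace Z] [TopologicalSpace W] {f : (X ⊕ Y) × Z → W}
    (hl : Continuous fun p : X × Z => f (Sum.inl p.1, p.2))
    (hr : Continuous fun p : Y × Z => f (Sum.inr p.1, p.2)) : Continuous f := by
  have key : f = (Sum.elim (fun p : X × Z => f (Sum.inl p.1, p.2))
      (fun p : Y × Z => f (Sum.inr p.1, p.2))) ∘ (Homeomorph.sumProdDistrib) := by
    funext p; obtain ⟨c|c, x⟩ := p <;> simp
  rw [key]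
  exact (continuous_sumElim.mpr ⟨hl, hr⟩).comp (Homeomorph.continuous _)

lemma continuous_sigmaProd {ι : Type*} {X : ι → Type*} {Z W : Type*}
    [∀ i, TopologicalSpace (X i)] [TopologicalSpace Z] [TopologicalSpace W]
    {f : (Σ i, X i) × Z → W}
    (hf : ∀ i, Continuous fun p : X i × Z => f (⟨i, p.1⟩, p.2)) : Continuous f := by
  have key : f = (fun q : Σ i, X i × Z => f (⟨q.1, q.2.1⟩, q.2.2))
      ∘ (Homeomorph.sigmaProdDistrib) := by
    funext p; obtain ⟨⟨i, c⟩, x⟩ := p; simp; rfl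
  rw [key]
  exact (continuous_sigma hf).comp (Homeomorph.continuous _)

lemma TermSp.continuous_eval {Ω : ℕ → Type} [∀ n, TopologicalSpace (Ω n)]
    {A : Type} [TopologicalSpace A] {m : ℕ}
    (E : ∀ n, Ω n → (Fin n → A) → A)
    (hE : ∀ n, Continuous fun p : Ω n × (Fin n → A) => E n p.1 p.2) :
    ∀ h, Continuous fun p : TermSp Ω A m h × A => TermSp.eval E p.1 p.2
  | 0 => by
    apply continuous_sumProd (X := Unit) (Y := A) (Z := A)
    · exact continuous_snd
    · exact continuous_fst
  | h+1 => by
    have ih := TermSp.continuous_eval (m := m) E hE h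
    apply continuous_sumProd (X := TermSp Ω A m h)
      (Y := Σ n : Fin (m+1), Ω n × (Fin n → TermSp Ω A m h)) (Z := A)
    · exact ih
    · apply continuous_sigmaProd
      intro n
      exact (hE n).comp <| (continuous_fst.comp continuous_fst).prodMk <|
        continuous_pi fun i => ih.comp (f := fun p : (Ω n × (Fin n → TermSp Ω A m h)) × A => (p.1.2 i, p.2)) <|
          ((continuous_apply i).comp (continuous_snd.comp continuous_fst)).prodMk
            continuous_snd





/-- A translation of the `Ω`-algebra `(A, E)`. -/
def IsTranslation {Ω : ℕ → Type} {A : Type} (E : ∀ n, Ω n → (Fin n → A) → A)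
    (g : A → A) : Prop :=
  ∃ (n : ℕ) (ω : Ω n) (i : Fin n) (a : Fin n → A),
    g = fun x => E n ω (Function.update a i x)

/-- Membership in the translation monoid `M(𝐀)`. -/
inductive InTransMonoid {Ω : ℕ → Type} {A : Type} (E : ∀ n, Ω n → (Fin n → A) → A) :
    (A → A) → Prop
  | id : InTransMonoid E (fun x => x)
  | comp {g f : A → A} : IsTranslation E g → InTransMonoid E f → InTransMonoid E (g ∘ f)

/-- A continuous homomorphism from the topological `Ω`-algebra `(A, E)` onto a finite
discrete topological `Ω`-algebra. -/
structure FinQuot (Ω : ℕ → Type) [∀ n, TopologicalSpace (Ω n)]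
    (A : Type) [TopologicalSpace A] (E : ∀ n, Ω n → (Fin n → A) → A) where
  B : Type
  [tB : TopologicalSpace B]
  [finB : Finite B]
  [discB : DiscreteTopology B]
  op : ∀ n, Ω n → (Fin n → B) → B
  contOp : ∀ n, Continuous fun p : Ω n × (Fin n → B) => op n p.1 p.2
  toFun : A → B
  cont : Continuous toFun
  hom : ∀ (n : ℕ) (ω : Ω n) (a : Fin n → A), toFun (E n ω a) = op n ω fun i => toFun (a i)

/-- A topological `Ω`-algebra is profinite if it is compact and residually finite. -/
def IsProfinite (Ω : ℕ → Type) [∀ n, TopologicalSpace (Ω n)]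
    (A : Type) [TopologicalSpace A] (E : ∀ n, Ω n → (Fin n → A) → A) : Prop :=
  CompactSpace A ∧ ∀ x y : A, x ≠ y → ∃ q : FinQuot Ω A E, q.toFun x ≠ q.toFun y
/-- Ω-polynomials over `A` in a single variable `x`. -/
inductive PolyTerm (Ω : ℕ → Type) (A : Type) : Type
  | var : PolyTerm Ω A
  | const : A → PolyTerm Ω A
  | app : (n : ℕ) → Ω n → (Fin n → PolyTerm Ω A) → PolyTerm Ω A

namespace PolyTerm

/-- Number of occurrences of the variable `x`; a term is linear in `x` iff this is `1`. -/
def varCount {Ω : ℕ → Type} {A : Type} : PolyTerm Ω A → ℕ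
  | .var => 1
  | .const _ => 0
  | .app n _ ts => ∑ i : Fin n, varCount (ts i)

/-- The height of a term (constants and the variable have height `0`). -/
def height {Ω : ℕ → Type} {A : Type} : PolyTerm Ω A → ℕ
  | .var => 0
  | .const _ => 0
  | .app n _ ts => if n = 0 then 0 else (Finset.univ.sup fun i : Fin n => height (ts i)) + 1

/-- The arity of a term. -/
def arity {Ω : ℕ → Type} {A : Type} : PolyTerm Ω A → ℕ
  | .var => 0
  | .const _ => 0
  | .app n _ ts => max n (Finset.univ.sup fun i : Fin n => arity (ts i))

/-- Evaluation of a polynomial as a unary function on `A` (the map `Ψ_𝐀`). -/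
def eval {Ω : ℕ → Type} {A : Type} (E : ∀ n, Ω n → (Fin n → A) → A) :
    PolyTerm Ω A → A → A
  | .var, z => z
  | .const a, _ => a
  | .app n ω ts, z => E n ω fun i => eval E (ts i) z

end PolyTerm

def TermSp.var0 (Ω : ℕ → Type) (A : Type) (m : ℕ) : ∀ h, TermSp Ω A m h
  | 0 => Sum.inl ()
  | h+1 => Sum.inl (TermSp.var0 Ω A m h)

def TermSp.const0 (Ω : ℕ → Type) (A : Type) (m : ℕ) (a : A) : ∀ h, TermSp Ω A m h
  | 0 => Sum.inr a
  | h+1 => Sum.inl (TermSp.const0 Ω A m a h)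

lemma TermSp.eval_var0 {Ω : ℕ → Type} {A : Type} {m : ℕ} (E : ∀ n, Ω n → (Fin n → A) → A) :
    ∀ h (x : A), TermSp.eval E (TermSp.var0 Ω A m h) x = x
  | 0, x => rfl
  | h+1, x => TermSp.eval_var0 E h x

lemma TermSp.eval_const0 {Ω : ℕ → Type} {A : Type} {m : ℕ} (E : ∀ n, Ω n → (Fin n → A) → A)
    (a : A) : ∀ h (x : A), TermSp.eval E (TermSp.const0 Ω A m a h) x = a
  | 0, x => rfl
  | h+1, x => TermSp.eval_const0 E a h x

lemma TermSp.exists_code {Ω : ℕ → Type} {A : Type} {m : ℕ} (E : ∀ n, Ω n → (Fin n → A) → A)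
    (t : PolyTerm Ω A) : ∀ (h : ℕ), t.height ≤ h → t.arity ≤ m →
      ∃ c : TermSp Ω A m (h+1), ∀ x, TermSp.eval E c x = PolyTerm.eval E t x := by
  induction t with
  | var => exact fun h _ _ => ⟨TermSp.var0 Ω A m (h+1), fun x => TermSp.eval_var0 E (h+1) x⟩
  | const a => exact fun h _ _ => ⟨TermSp.const0 Ω A m a (h+1), fun x => TermSp.eval_const0 E a (h+1) x⟩
  | app n ω ts ih =>
    intro h hht har
    rw [PolyTerm.arity, max_le_iff, Finset.sup_le_iff] at har
    have hn : n ≤ m := har.1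
    have hts : ∀ i, (ts i).arity ≤ m := fun i => har.2 i (Finset.mem_univ i)
    by_cases hn0 : n = 0
    · subst hn0
      refine ⟨Sum.inr ⟨⟨0, Nat.succ_pos m⟩, ω, Fin.elim0⟩, fun x => ?_⟩
      show E 0 ω _ = E 0 ω _
      congr 1
      funext i; exact i.elim0
    · rw [PolyTerm.height, if_neg hn0] at hht
      obtain ⟨k, rfl⟩ : ∃ k, h = k + 1 := ⟨h - 1, by omega⟩
      have hhts : ∀ i, (ts i).height ≤ k := fun i =>
        le_trans (Finset.le_sup (f := fun i => (ts i).height) (Finset.mem_univ i)) (by omega)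
      choose c hc using fun i => ih i k (hhts i) (hts i)
      refine ⟨Sum.inr ⟨⟨n, by omega⟩, ω, c⟩, fun x => ?_⟩
      show E n ω _ = E n ω _
      congr 1
      funext i; exact hc i x


/-- `𝐀 = (A, E)` is affinely bounded by `m`: the translation monoid consists exactly of the
evaluations of linear `Ω`-polynomials over `A` in one variable of height `≤ m` and arity
`≤ m`. -/
def AffinelyBoundedBy {Ω : ℕ → Type} {A : Type} (E : ∀ n, Ω n → (Fin n → A) → A)
    (m : ℕ) : Prop :=
  {f : A → A | InTransMonoid E f} =
    {f : A → A | ∃ t : PolyTerm Ω A,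
      t.varCount = 1 ∧ t.height ≤ m ∧ t.arity ≤ m ∧ f = PolyTerm.eval E t}

/-- `𝐀` is affinely bounded if it is affinely bounded by some `m ∈ ℕ`. -/
def AffinelyBounded {Ω : ℕ → Type} {A : Type} (E : ∀ n, Ω n → (Fin n → A) → A) : Prop :=
  ∃ m : ℕ, AffinelyBoundedBy E m

/-- A Hausdorff topological `Ω`-algebra is simple if every non-constant continuous
homomorphism into a Hausdorff topological `Ω`-algebra is injective. -/
def IsSimple (Ω : ℕ → Type) [∀ n, TopologicalSpace (Ω n)]
    (A : Type) [TopologicalSpace A] (E : ∀ n, Ω n → (Fin n → A) → A) : Prop :=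
  ∀ (B : Type) [TopologicalSpace B] [T2Space B]
    (E' : ∀ n, Ω n → (Fin n → B) → B),
    (∀ n, Continuous fun p : Ω n × (Fin n → B) => E' n p.1 p.2) →
    ∀ φ : A → B, Continuous φ →
      (∀ (n : ℕ) (ω : Ω n) (a : Fin n → A), φ (E n ω a) = E' n ω fun i => φ (a i)) →
      (¬ ∀ x y : A, φ x = φ y) → Function.Injective φ

lemma InTransMonoid.comp_translation {Ω : ℕ → Type} {A : Type}
    {E : ∀ n, Ω n → (Fin n → A) → A} {f t : A → A}
    (hf : InTransMonoid E f) (ht : IsTranslation E t) : InTransMonoid E (f ∘ t) := by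
  induction hf with
  | id => exact (InTransMonoid.comp ht InTransMonoid.id : InTransMonoid E (t ∘ fun x => x))
  | comp hg _ ih => exact (InTransMonoid.comp hg ih :)


lemma exists_finite_boxes {X Y : Type} [TopologicalSpace X] [TopologicalSpace Y]
    {K : Set (X × Y)} (hKo : IsOpen K) (hKc : IsCompact K) :
    ∃ s : Finset (Set X × Set Y), (∀ p ∈ s, p.1 ×ˢ p.2 ⊆ K) ∧
      K ⊆ ⋃ p ∈ s, p.1 ×ˢ p.2 := by
  have hcov : ∀ z ∈ K, ∃ uv : Set X × Set Y,
      IsOpen uv.1 ∧ IsOpen uv.2 ∧ z ∈ uv.1 ×ˢ uv.2 ∧ uv.1 ×ˢ uv.2 ⊆ K := by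
    intro z hz
    obtain ⟨u, v, hu, hv, hzu, hzv, huv⟩ := isOpen_prod_iff.mp hKo z.1 z.2 hz
    exact ⟨(u, v), hu, hv, ⟨hzu, hzv⟩, huv⟩
  classical
  choose! uv h1 h2 h3 h4 using hcov
  obtain ⟨tf, htf⟩ := hKc.elim_finite_subcover (fun z : K => (uv z).1 ×ˢ (uv z).2)
    (fun z => ((h1 z z.2).prod (h2 z z.2)))
    (fun z hz => Set.mem_iUnion.mpr ⟨⟨z, hz⟩, h3 z hz⟩)
  refine ⟨tf.image fun z => uv z.1, ?_, ?_⟩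
  · intro p hp
    obtain ⟨z, _, rfl⟩ := Finset.mem_image.mp hp
    exact h4 z.1 z.2
  · intro z hz
    obtain ⟨i, hi⟩ := Set.mem_iUnion.mp (htf hz)
    rw [Set.mem_iUnion] at hi
    obtain ⟨hit, hzi⟩ := hi
    exact Set.mem_iUnion₂.mpr ⟨uv i.1, Finset.mem_image_of_mem _ hit, hzi⟩



/-- An affinely bounded simple compact Hausdorff topological algebra over a compact
continuous signature is either connected or finite. -/
theorem statement16 (Ω : ℕ → Type) [∀ n, TopologicalSpace (Ω n)]
    [∀ n, CompactSpace (Ω n)]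
    (A : Type) [TopologicalSpace A] [CompactSpace A] [T2Space A]
    (E : ∀ n, Ω n → (Fin n → A) → A)
    (hE : ∀ n, Continuous fun p : Ω n × (Fin n → A) => E n p.1 p.2)
    (hbd : AffinelyBounded E) (hsimple : IsSimple Ω A E) :
    ConnectedSpace A ∨ Finite A := by
  by_cases hconn : ConnectedSpace A
  · exact Or.inl hconn
  right
  cases isEmpty_or_nonempty A with
  | inl h => exact Finite.of_subsingleton
  | inr hne =>
  classical
  have hnpc : ¬ PreconnectedSpace A := fun h => hconn (@ConnectedSpace.mk A _ h hne)
  rw [preconnectedSpace_iff_univ] at hnpc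
  unfold IsPreconnected at hnpc
  push_neg at hnpc
  obtain ⟨U, v, hUo, hvo, hcov, hUne', hvne', hdis⟩ := hnpc
  have hcomp : Uᶜ = v := by
    apply Set.Subset.antisymm
    · intro x hx
      exact (hcov (Set.mem_univ x)).resolve_left hx
    · intro x hxv hxU
      have : x ∈ Set.univ ∩ (U ∩ v) := ⟨Set.mem_univ x, hxU, hxv⟩
      rw [hdis] at this
      exact this
  have hUc : IsClopen U := by
    refine ⟨?_, hUo⟩
    rw [← isOpen_compl_iff, hcomp]
    exact hvo
  have hUne : U.Nonempty := by
    obtain ⟨x, -, hx⟩ := hUne'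
    exact ⟨x, hx⟩
  have hUv : ∃ y, y ∉ U := by
    obtain ⟨y, -, hy⟩ := hvne'
    exact ⟨y, by rw [← hcomp] at hy; exact hy⟩
  obtain ⟨m, hm⟩ := hbd
  -- every element of the translation monoid is coded by the compact term space
  have hMev : ∀ f : A → A, InTransMonoid E f →
      ∃ c : TermSp Ω A m (m + 1), ∀ x, TermSp.eval E c x = f x := by
    intro f hf
    have hmem : f ∈ {f : A → A | InTransMonoid E f} := hf
    rw [hm] at hmem
    obtain ⟨t, -, hht, har, rfl⟩ := hmem
    exact TermSp.exists_code E t m hht har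
  have hcont : ∀ f : A → A, InTransMonoid E f → Continuous f := by
    intro f hf
    obtain ⟨c, hc⟩ := hMev f hf
    have hcc : Continuous fun x => TermSp.eval (m := m) E (h := m + 1) c x :=
      (TermSp.continuous_eval E hE (m + 1)).comp (continuous_const.prodMk continuous_id)
    have : (fun x => TermSp.eval (m := m) E (h := m + 1) c x) = f := funext hc
    rwa [this] at hcc
  -- the syntactic congruence
  let r : A → A → Prop := fun x y => ∀ f : A → A, InTransMonoid E f → (f x ∈ U ↔ f y ∈ U)
  have hrrefl : ∀ x, r x x := fun _ _ _ => Iff.rfl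
  have hrsymm : ∀ {x y}, r x y → r y x := fun h f hf => (h f hf).symm
  have hrtrans : ∀ {x y z}, r x y → r y z → r x z := fun h1 h2 f hf => (h1 f hf).trans (h2 f hf)
  have hrtr : ∀ x y, r x y → ∀ g, IsTranslation E g → r (g x) (g y) := by
    intro x y hxy g hg f hf
    exact hxy (f ∘ g) (hf.comp_translation hg)
  have hcong : ∀ n (ω : Ω n) (a b : Fin n → A), (∀ i, r (a i) (b i)) →
      r (E n ω a) (E n ω b) := by
    intro n ω a b hab
    have claim : ∀ s : Finset (Fin n),
        r (E n ω a) (E n ω fun i => if i ∈ s then b i else a i) := by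
      intro s
      induction s using Finset.induction with
      | empty => simpa using hrrefl (E n ω a)
      | @insert j s hj ih =>
        have hupd : (fun i => if i ∈ insert j s then b i else a i)
            = Function.update (fun i => if i ∈ s then b i else a i) j (b j) := by
          funext i
          rcases eq_or_ne i j with rfl | hij
          · simp [Function.update]
          · simp [Function.update, hij]
        have hsame : Function.update (fun i => if i ∈ s then b i else a i) j (a j)
            = (fun i => if i ∈ s then b i else a i) := by
          funext i
          rcases eq_or_ne i j with rfl | hij
          · simp [Function.update, hj]
          · simp [Function.update, hij]
        have hstep := hrtr (a j) (b j) (hab j)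
          (fun z => E n ω (Function.update (fun i => if i ∈ s then b i else a i) j z))
          ⟨n, ω, j, _, rfl⟩
        rw [hsame] at hstep
        rw [hupd]
        exact hrtrans ih hstep
    have := claim Finset.univ
    simpa using this
  -- quotient
  let st : Setoid A := ⟨fun x y => r x y, ⟨fun x => hrrefl x, fun h => hrsymm h,
    fun h1 h2 => hrtrans h1 h2⟩⟩
  let Q := Quotient st
  letI : TopologicalSpace Q := ⊥
  haveI : DiscreteTopology Q := ⟨rfl⟩
  let φ : A → Q := Quotient.mk st
  -- finite index via boxes
  let T := TermSp Ω A m (m + 1)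
  let K : Set (T × A) := {p : T × A | TermSp.eval E p.1 p.2 ∈ U}
  have hKo : IsOpen K := hUc.2.preimage (TermSp.continuous_eval E hE (m + 1))
  have hKcl : IsClosed K := hUc.1.preimage (TermSp.continuous_eval E hE (m + 1))
  obtain ⟨s, hs1, hs2⟩ := exists_finite_boxes hKo hKcl.isCompact
  let P : A → Finset (Set T × Set A) := fun x => s.filter fun p => x ∈ p.2
  have hPkey : ∀ x y, P x = P y → r x y := by
    intro x y hP f hf
    obtain ⟨c, hc⟩ := hMev f hf
    have hmem : ∀ z : A, (TermSp.eval E c z ∈ U) ↔ ∃ p ∈ P z, c ∈ p.1 := by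
      intro z
      constructor
      · intro hz
        obtain ⟨p, hp, hcp⟩ := Set.mem_iUnion₂.mp (hs2 (show (c, z) ∈ K from hz))
        exact ⟨p, Finset.mem_filter.mpr ⟨hp, hcp.2⟩, hcp.1⟩
      · rintro ⟨p, hp, hcp⟩
        obtain ⟨hps, hzp⟩ := Finset.mem_filter.mp hp
        exact hs1 p hps (show (c, z) ∈ p.1 ×ˢ p.2 from ⟨hcp, hzp⟩)
    rw [← hc x, ← hc y, hmem x, hmem y, hP]
  haveI : Finite Q := by
    have hsurj : Function.Surjective (fun S : {S // S ∈ s.powerset} =>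
        if hS : ∃ x : A, P x = S.1 then φ hS.choose else φ hne.some) := by
      intro q
      obtain ⟨x, rfl⟩ := Quotient.exists_rep q
      refine ⟨⟨P x, Finset.mem_powerset.mpr (Finset.filter_subset _ _)⟩, ?_⟩
      have hex : ∃ y : A, P y = P x := ⟨x, rfl⟩
      simp only [dif_pos hex]
      exact Quotient.sound (hPkey _ _ hex.choose_spec)
    exact Finite.of_surjective _ hsurj
  -- continuity of the quotient map
  have hclassclosed : ∀ q : Q, IsClosed (φ ⁻¹' {q}) := by
    intro q
    obtain ⟨x₀, rfl⟩ := Quotient.exists_rep q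
    have hpre : φ ⁻¹' {Quotient.mk st x₀} = ⋂ (f : A → A) (_ : InTransMonoid E f),
        {y : A | (f y ∈ U) ↔ (f x₀ ∈ U)} := by
      ext y
      simp only [Set.mem_preimage, Set.mem_singleton_iff, Set.mem_iInter, Set.mem_setOf_eq]
      constructor
      · intro h f hf
        exact Quotient.exact h f hf
      · intro h
        exact Quotient.sound fun f hf => h f hf
    rw [hpre]
    refine isClosed_iInter fun f => isClosed_iInter fun hf => ?_
    by_cases hx0 : f x₀ ∈ U
    · have : {y : A | (f y ∈ U) ↔ (f x₀ ∈ U)} = f ⁻¹' U := by ext y; simp [hx0]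
      rw [this]
      exact hUc.1.preimage (hcont f hf)
    · have : {y : A | (f y ∈ U) ↔ (f x₀ ∈ U)} = f ⁻¹' Uᶜ := by ext y; simp [hx0]
      rw [this]
      exact (hUc.2.isClosed_compl).preimage (hcont f hf)
  have hφ : Continuous φ := by
    rw [continuous_discrete_rng]
    intro q
    have hcompl : φ ⁻¹' {q} = (⋃ q' ∈ ({q}ᶜ : Set Q), φ ⁻¹' {q'})ᶜ := by
      ext y
      constructor
      · intro h hmem
        obtain ⟨q', hq', hy⟩ := Set.mem_iUnion₂.mp hmem
        exact hq' ((Set.mem_singleton_iff.mp hy).symm.trans (Set.mem_singleton_iff.mp h))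
      · intro h
        by_contra hne'
        exact h (Set.mem_iUnion₂.mpr ⟨φ y, fun he => hne' (Set.mem_singleton_iff.mp he), rfl⟩)
    rw [hcompl]
    exact (Set.Finite.isClosed_biUnion (Set.toFinite _)
      fun q' _ => hclassclosed q').isOpen_compl
  -- quotient algebra
  let E' : ∀ n, Ω n → (Fin n → Q) → Q := fun n ω qs => φ (E n ω fun i => (qs i).out)
  have hE' : ∀ n, Continuous fun p : Ω n × (Fin n → Q) => E' n p.1 p.2 := by
    intro n
    have h1 : Continuous fun p : Ω n × (Fin n → Q) =>
        ((p.1, fun i => (p.2 i).out) : Ω n × (Fin n → A)) :=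
      continuous_fst.prodMk ((continuous_of_discreteTopology
        (f := fun qs : Fin n → Q => fun i => (qs i).out)).comp continuous_snd)
    exact hφ.comp ((hE n).comp h1)
  have hhom : ∀ n (ω : Ω n) (a : Fin n → A), φ (E n ω a) = E' n ω fun i => φ (a i) := by
    intro n ω a
    refine Quotient.sound (hcong n ω a (fun i => (Quotient.mk st (a i)).out) fun i => ?_)
    show r (a i) ((Quotient.mk st (a i)).out)
    exact Quotient.exact (Quotient.out_eq (Quotient.mk st (a i))).symm
  -- simplicity applies
  obtain ⟨uU, huU⟩ := hUne
  obtain ⟨vV, hvV⟩ := hUv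
  have hnc : ¬ ∀ x y : A, φ x = φ y := by
    intro hall
    have hr : r uU vV := Quotient.exact (hall uU vV)
    exact hvV ((hr (fun x => x) InTransMonoid.id).mp huU)
  have hinj := hsimple Q E' hE' φ hφ hhom hnc
  exact Finite.of_injective φ hinj
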